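/- Let T_1(y) = y + α (mod 1) be the rotation of the circle S = ℝ/ℤ and T_2 = T_{α,β,δ} the double rotation, with α, β irrational, 0 < β < min(δ, 1 − δ), and δ ∈ (0,1). Then there exists a finite itinerary J = (j_1, …, j_k) ∈ {1,2}^k such that the image T_J(S) = (T_{j_1} ∘ … ∘ T_{j_k})(S) is contained in an arc of length less than β. -/

import Mathlib

open MeasureTheory Topology Filter Set

/-- The rigid rotation `T₁(y) = y + α (mod 1)` of the circle `S = ℝ/ℤ`. -/
noncomputable def rigidRot (a : ℝ) : AddCircle (1 : ℝ) → AddCircle (1 : ℝ) :=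
  fun y => y + (a : AddCircle (1 : ℝ))

/-- The double rotation `T_{α,β,δ}` of the circle `S = ℝ/ℤ`:
`x ↦ x + α + β (mod 1)` if `x ≤ δ` and `x ↦ x + α (mod 1)` if `x > δ`,
where `x` is identified with its representative in `[0,1)`. -/
noncomputable def doubleRot (a b dl : ℝ) : AddCircle (1 : ℝ) → AddCircle (1 : ℝ) :=
  fun x =>
    if ((AddCircle.equivIco 1 0 x : ℝ)) ≤ dl then x + ((a + b : ℝ) : AddCircle (1 : ℝ))
    else x + (a : AddCircle (1 : ℝ))

/-- `T_J = T_{j_1} ∘ … ∘ T_{j_k}` for a finite itinerary `J = (j_1, …, j_k)` in `{1,2}^k`;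
here the letter `true` stands for the rigid rotation `T₁` and `false` for the double
rotation `T₂ = T_{α,β,δ}`. -/
noncomputable def applyWord (a b dl : ℝ) : List Bool → AddCircle (1 : ℝ) → AddCircle (1 : ℝ)
  | [] => id
  | j :: J => (cond j (rigidRot a) (doubleRot a b dl)) ∘ applyWord a b dl J


namespace CWISA

/-- representative lemma -/
lemma rep_eq {x : ℝ} (h0 : 0 ≤ x) (h1 : x < 1) :
    ((AddCircle.equivIco 1 0 (x : AddCircle (1:ℝ)) : ℝ)) = x := by
  have h := AddCircle.coe_equivIco_mk_apply (p := (1:ℝ)) x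
  rw [show ((x : AddCircle (1:ℝ))) = QuotientAddGroup.mk x from rfl, h]
  simp [Int.fract_eq_self.mpr ⟨h0, h1⟩]

lemma exists_rep (y : AddCircle (1:ℝ)) : ∃ x : ℝ, 0 ≤ x ∧ x < 1 ∧ (x : AddCircle (1:ℝ)) = y := by
  refine ⟨(AddCircle.equivIco 1 0 y : ℝ), ?_, ?_, (AddCircle.equivIco 1 0).symm_apply_apply y⟩
  · simpa using ((AddCircle.equivIco 1 0 y).2 : _ ∈ Ico (0:ℝ) (0+1)).1
  · simpa using ((AddCircle.equivIco 1 0 y).2 : _ ∈ Ico (0:ℝ) (0+1)).2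

lemma coe_add_one (x : ℝ) : ((x + 1 : ℝ) : AddCircle (1:ℝ)) = (x : AddCircle (1:ℝ)) :=
  AddCircle.coe_add_period 1 x

lemma coe_add_int (x : ℝ) (m : ℤ) : ((x + m : ℝ) : AddCircle (1:ℝ)) = (x : AddCircle (1:ℝ)) := by
  induction m using Int.induction_on with
  | zero => norm_num
  | succ n ih =>
      push_cast at ih ⊢
      rw [show (x + (n+1) : ℝ) = (x + n) + 1 by ring, coe_add_one, ih]
  | pred n ih =>
      push_cast at ih ⊢
      have h2 : ((x + -(n:ℝ)) : ℝ) = ((x + (-n-1)) + 1 : ℝ) := by ring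
      calc ((x + (-(n:ℝ)-1) : ℝ) : AddCircle (1:ℝ))
          = ((x + (-(n:ℝ)-1) + 1 : ℝ) : AddCircle (1:ℝ)) := (coe_add_one _).symm
        _ = ((x + -(n:ℝ) : ℝ) : AddCircle (1:ℝ)) := by norm_num
        _ = (x : AddCircle (1:ℝ)) := ih

lemma doubleRot_coe_le {a b dl : ℝ} {x : ℝ} (h0 : 0 ≤ x) (hx : x ≤ dl) (hdl : dl < 1) :
    doubleRot a b dl (x : AddCircle (1:ℝ)) = ((x + (a + b) : ℝ) : AddCircle (1:ℝ)) := by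
  unfold doubleRot
  rw [rep_eq h0 (lt_of_le_of_lt hx hdl), if_pos hx]
  rfl

lemma doubleRot_coe_gt {a b dl : ℝ} {x : ℝ} (h0 : 0 ≤ dl) (hx : dl < x) (h1 : x < 1) :
    doubleRot a b dl (x : AddCircle (1:ℝ)) = ((x + a : ℝ) : AddCircle (1:ℝ)) := by
  unfold doubleRot
  rw [rep_eq (le_trans h0 hx.le) h1, if_neg (not_le.mpr hx)]
  rfl

lemma rigidRot_coe (a : ℝ) (x : ℝ) :
    rigidRot a (x : AddCircle (1:ℝ)) = ((x + a : ℝ) : AddCircle (1:ℝ)) := rfl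

/-- single-arc covering -/
def Cov1 (a b dl c ℓ : ℝ) : Prop :=
  ∃ J : List Bool, ∀ y : AddCircle (1:ℝ),
    ∃ x : ℝ, c ≤ x ∧ x ≤ c + ℓ ∧ applyWord a b dl J y = (x : AddCircle (1:ℝ))

/-- two-arc covering -/
def Cov2 (a b dl c₁ ℓ₁ c₂ ℓ₂ : ℝ) : Prop :=
  ∃ J : List Bool, ∀ y : AddCircle (1:ℝ),
    ∃ x : ℝ, ((c₁ ≤ x ∧ x ≤ c₁ + ℓ₁) ∨ (c₂ ≤ x ∧ x ≤ c₂ + ℓ₂)) ∧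
      applyWord a b dl J y = (x : AddCircle (1:ℝ))

variable {a b dl : ℝ}

lemma applyWord_cons (j : Bool) (J : List Bool) (y : AddCircle (1:ℝ)) :
    applyWord a b dl (j :: J) y
      = (cond j (rigidRot a) (doubleRot a b dl)) (applyWord a b dl J y) := rfl

lemma cov1_true {c ℓ : ℝ} (h : Cov1 a b dl c ℓ) : Cov1 a b dl (c + a) ℓ := by
  obtain ⟨J, hJ⟩ := h
  refine ⟨true :: J, fun y => ?_⟩
  obtain ⟨x, hx1, hx2, hx3⟩ := hJ y
  exact ⟨x + a, by linarith, by linarith, by rw [applyWord_cons, hx3]; rfl⟩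

lemma cov1_shift {c ℓ : ℝ} (m : ℤ) (h : Cov1 a b dl c ℓ) : Cov1 a b dl (c + m) ℓ := by
  obtain ⟨J, hJ⟩ := h
  refine ⟨J, fun y => ?_⟩
  obtain ⟨x, hx1, hx2, hx3⟩ := hJ y
  exact ⟨x + m, by linarith, by linarith, by rw [hx3, coe_add_int]⟩

lemma cov1_rotn {c ℓ : ℝ} (n : ℕ) (h : Cov1 a b dl c ℓ) : Cov1 a b dl (c + n * a) ℓ := by
  induction n with
  | zero => simpa using h
  | succ k ih =>
      have := cov1_true ih
      have he : c + k * a + a = c + (k + 1 : ℕ) * a := by push_cast; ring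
      rwa [he] at this

lemma cov2_true {c₁ ℓ₁ c₂ ℓ₂ : ℝ} (h : Cov2 a b dl c₁ ℓ₁ c₂ ℓ₂) :
    Cov2 a b dl (c₁ + a) ℓ₁ (c₂ + a) ℓ₂ := by
  obtain ⟨J, hJ⟩ := h
  refine ⟨true :: J, fun y => ?_⟩
  obtain ⟨x, hx, hx3⟩ := hJ y
  refine ⟨x + a, ?_, by rw [applyWord_cons, hx3]; rfl⟩
  rcases hx with ⟨h1, h2⟩ | ⟨h1, h2⟩
  · exact Or.inl ⟨by linarith, by linarith⟩
  · exact Or.inr ⟨by linarith, by linarith⟩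

lemma cov2_shift {c₁ ℓ₁ c₂ ℓ₂ : ℝ} (m₁ m₂ : ℤ) (h : Cov2 a b dl c₁ ℓ₁ c₂ ℓ₂) :
    Cov2 a b dl (c₁ + m₁) ℓ₁ (c₂ + m₂) ℓ₂ := by
  obtain ⟨J, hJ⟩ := h
  refine ⟨J, fun y => ?_⟩
  obtain ⟨x, hx, hx3⟩ := hJ y
  rcases hx with ⟨h1, h2⟩ | ⟨h1, h2⟩
  · exact ⟨x + m₁, Or.inl ⟨by linarith, by linarith⟩, by rw [hx3, coe_add_int]⟩
  · exact ⟨x + m₂, Or.inr ⟨by linarith, by linarith⟩, by rw [hx3, coe_add_int]⟩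

lemma cov2_rotn {c₁ ℓ₁ c₂ ℓ₂ : ℝ} (n : ℕ) (h : Cov2 a b dl c₁ ℓ₁ c₂ ℓ₂) :
    Cov2 a b dl (c₁ + n * a) ℓ₁ (c₂ + n * a) ℓ₂ := by
  induction n with
  | zero => simpa using h
  | succ k ih =>
      have := cov2_true ih
      have he : ∀ c : ℝ, c + k * a + a = c + (k + 1 : ℕ) * a := by intro c; push_cast; ring
      rwa [he c₁, he c₂] at this

lemma cov2_to_cov1 {c₁ ℓ₁ c₂ ℓ₂ : ℝ} (h : Cov2 a b dl c₁ ℓ₁ c₂ ℓ₂)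
    (h1 : c₁ ≤ c₂) (h2 : c₂ + ℓ₂ ≤ c₁ + ℓ₁) : Cov1 a b dl c₁ ℓ₁ := by
  obtain ⟨J, hJ⟩ := h
  refine ⟨J, fun y => ?_⟩
  obtain ⟨x, hx, hx3⟩ := hJ y
  rcases hx with ⟨ha1, ha2⟩ | ⟨ha1, ha2⟩
  · exact ⟨x, ha1, ha2, hx3⟩
  · exact ⟨x, by linarith, by linarith, hx3⟩

end CWISA
namespace CWISA2

lemma exists_small_step {a : ℝ} (ha : Irrational a) {ε : ℝ} (hε : 0 < ε) :
    ∃ (p : ℕ) (q : ℤ), (p : ℝ) * a - q ≠ 0 ∧ |(p : ℝ) * a - q| < ε := by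
  have hdense : Dense ((AddSubgroup.closure {a, (1:ℝ)} : AddSubgroup ℝ) : Set ℝ) := by
    rcases AddSubgroup.dense_or_cyclic (AddSubgroup.closure {a, (1:ℝ)}) with h | ⟨c, hc⟩
    · exact h
    · exfalso
      have haS : a ∈ AddSubgroup.closure {a, (1:ℝ)} := AddSubgroup.subset_closure (by simp)
      have h1S : (1 : ℝ) ∈ AddSubgroup.closure {a, (1:ℝ)} := AddSubgroup.subset_closure (by simp)
      rw [hc] at haS h1S
      obtain ⟨n, hn⟩ := AddSubgroup.mem_closure_singleton.mp haS
      obtain ⟨k, hk⟩ := AddSubgroup.mem_closure_singleton.mp h1S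
      have hk0 : k ≠ 0 := by rintro rfl; simp at hk
      have hka : (k : ℝ) * a = n := by
        have h := smul_comm k n c
        rw [hn, hk] at h
        simpa [zsmul_eq_mul] using h
      have hkR : (k:ℝ) ≠ 0 := Int.cast_ne_zero.mpr hk0
      have : a = ((n : ℚ) / (k : ℚ) : ℚ) := by
        push_cast
        rw [eq_div_iff hkR]
        linear_combination hka
      exact ha ⟨_, this.symm⟩
  set ε' := min ε (1/2) with hε'
  have hε'0 : 0 < ε' := lt_min hε (by norm_num)
  obtain ⟨g, hgS, hg⟩ := hdense.exists_mem_open isOpen_Ioo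
    (⟨ε'/2, by constructor <;> linarith⟩ : (Ioo 0 ε').Nonempty)
  obtain ⟨z, m, hzm⟩ := AddSubgroup.mem_closure_pair.mp hgS
  have hg0 : 0 < g := hg.1
  have hgε : g < ε' := hg.2
  have hgε2 : g < 1 := lt_of_lt_of_le hgε (le_trans (min_le_right _ _) (by norm_num))
  have hz0 : z ≠ 0 := by
    intro h
    rw [h] at hzm
    simp only [zero_zsmul, zero_add, zsmul_eq_mul, mul_one] at hzm
    have hmg : (m:ℝ) = g := by simpa using hzm
    have h1 : (0:ℝ) < (m:ℝ) := by rw [hmg]; exact hg0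
    have h2 : (m:ℝ) < 1 := by rw [hmg]; exact hgε2
    have h1' : (0:ℤ) < m := by exact_mod_cast h1
    have h2' : (m:ℤ) < 1 := by exact_mod_cast h2
    omega
  have hgval : (z:ℝ) * a + m = g := by
    rw [← hzm]; push_cast [zsmul_eq_mul]; ring
  rcases lt_or_gt_of_ne hz0 with hneg | hpos
  · have hzn : (0:ℤ) ≤ -z := by omega
    have hc : (((-z).toNat : ℕ) : ℝ) = -(z:ℝ) := by
      have := Int.toNat_of_nonneg hzn
      exact_mod_cast congrArg (fun z : ℤ => (z : ℝ)) this
    refine ⟨(-z).toNat, m, ?_, ?_⟩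
    · rw [hc]
      have hval : -(z:ℝ) * a - m = -g := by linear_combination -hgval
      rw [hval]
      simpa using ne_of_gt hg0
    · rw [hc]
      have hval : -(z:ℝ) * a - m = -g := by linear_combination -hgval
      rw [hval, abs_neg, abs_of_pos hg0]
      exact lt_of_lt_of_le hgε (min_le_left _ _)
  · have hzn : (0:ℤ) ≤ z := by omega
    have hc : ((z.toNat : ℕ) : ℝ) = (z:ℝ) := by
      have := Int.toNat_of_nonneg hzn
      exact_mod_cast congrArg (fun z : ℤ => (z : ℝ)) this
    refine ⟨z.toNat, -m, ?_, ?_⟩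
    · rw [hc]
      have hval : (z:ℝ) * a - (-m : ℤ) = g := by push_cast; linear_combination hgval
      rw [hval]
      exact ne_of_gt hg0
    · rw [hc]
      have hval : (z:ℝ) * a - (-m : ℤ) = g := by push_cast; linear_combination hgval
      rw [hval, abs_of_pos hg0]
      exact lt_of_lt_of_le hgε (min_le_left _ _)

lemma dens {a : ℝ} (ha : Irrational a) (t : ℝ) {ε : ℝ} (hε : 0 < ε) :
    ∃ (n : ℕ) (z : ℤ), t ≤ n * a - z ∧ n * a - z < t + ε := by
  obtain ⟨p, q, hne, hlt⟩ := exists_small_step ha hε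
  set e := (p : ℝ) * a - q with he
  rcases hne.lt_or_gt with heneg | hepos
  · set M : ℤ := -⌈t⌉ with hM
    have htM : t + M ≤ 0 := by
      have := Int.le_ceil t
      push_cast [hM]; linarith
    set j : ℤ := ⌊(t + M) / e⌋ with hj
    have hj0 : 0 ≤ j := by
      apply Int.le_floor.mpr
      simp only [Int.cast_zero]
      exact div_nonneg_iff.mpr (Or.inr ⟨htM, heneg.le⟩)
    have h1 : (j : ℝ) ≤ (t + M) / e := Int.floor_le _
    have h2 : (t + M) / e - 1 < j := by
      have := Int.lt_floor_add_one ((t + M) / e); linarith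
    have hje1 : t + M ≤ j * e := by
      calc t + (M:ℝ) = ((t + M)/e) * e := by field_simp
        _ ≤ j * e := mul_le_mul_of_nonpos_right h1 heneg.le
    have hje2 : j * e < t + M + ε := by
      have h4 : (j:ℝ) * e < ((t + M)/e - 1) * e := mul_lt_mul_of_neg_right h2 heneg
      have h3 : ((t + M)/e - 1) * e = (t + M) - e := by field_simp
      rw [h3] at h4
      have h5 : -e < ε := by
        have := neg_abs_le e
        have := abs_lt.mp hlt
        linarith [this.1]
      linarith
    have hjr : ((j.toNat : ℕ) : ℝ) = (j : ℝ) := by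
      exact_mod_cast congrArg (fun z : ℤ => (z : ℝ)) (Int.toNat_of_nonneg hj0)
    refine ⟨j.toNat * p, j.toNat * q + M, ?_, ?_⟩
    all_goals {
      have hkey : ((j.toNat * p : ℕ) : ℝ) * a - ((j.toNat * q + M : ℤ) : ℝ) = j * e - M := by
        push_cast [he]
        rw [hjr]
        ring
      rw [hkey]
      linarith }
  · set M : ℤ := ⌈-t⌉ with hM
    have htM : 0 ≤ t + M := by
      have := Int.le_ceil (-t)
      push_cast [hM]; linarith
    set j : ℤ := ⌈(t + M) / e⌉ with hj
    have hj0 : 0 ≤ j := Int.ceil_nonneg (div_nonneg htM hepos.le)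
    have h1 : (t + M) / e ≤ (j : ℝ) := Int.le_ceil _
    have h2 : (j:ℝ) < (t + M) / e + 1 := by
      have := Int.ceil_lt_add_one ((t + M) / e); linarith
    have hje1 : t + M ≤ j * e := by
      calc t + (M:ℝ) = ((t + M)/e) * e := by field_simp
        _ ≤ j * e := mul_le_mul_of_nonneg_right h1 hepos.le
    have hje2 : j * e < t + M + ε := by
      have h4 : (j:ℝ) * e < ((t + M)/e + 1) * e := mul_lt_mul_of_pos_right h2 hepos
      have h3 : ((t + M)/e + 1) * e = (t + M) + e := by field_simp
      rw [h3] at h4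
      have h5 : e < ε := lt_of_le_of_lt (le_abs_self e) hlt
      linarith
    have hjr : ((j.toNat : ℕ) : ℝ) = (j : ℝ) := by
      exact_mod_cast congrArg (fun z : ℤ => (z : ℝ)) (Int.toNat_of_nonneg hj0)
    refine ⟨j.toNat * p, j.toNat * q + M, ?_, ?_⟩
    all_goals {
      have hkey : ((j.toNat * p : ℕ) : ℝ) * a - ((j.toNat * q + M : ℤ) : ℝ) = j * e - M := by
        push_cast [he]
        rw [hjr]
        ring
      rw [hkey]
      linarith }

end CWISA2

namespace CWISA
variable {a b dl : ℝ}

/-- the first application of `T₂`: everything lands in `[a+b, a+1]`. -/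
lemma cov1_start (hb0 : 0 < b) (hbd : b ≤ dl) (hd1 : dl < 1) (hbd' : dl + b ≤ 1) :
    Cov1 a b dl (a + b) (1 - b) := by
  refine ⟨[false], fun y => ?_⟩
  obtain ⟨x, hx0, hx1, hxy⟩ := exists_rep y
  have happ : applyWord a b dl [false] y = doubleRot a b dl y := rfl
  by_cases hle : x ≤ dl
  · refine ⟨x + (a + b), by linarith, by linarith, ?_⟩
    rw [happ, ← hxy, doubleRot_coe_le hx0 hle hd1]
  · push_neg at hle
    refine ⟨x + a, by linarith, by linarith, ?_⟩
    rw [happ, ← hxy, doubleRot_coe_gt (by linarith) hle hx1]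

/-- fold a single arc `[c, c+L]` across `dl`. -/
lemma fold1 {c L : ℝ} (hc0 : 0 ≤ c) (hcd : c ≤ dl) (hc1 : c + L < 1) (hd1 : dl < 1)
    (hb0 : 0 ≤ b) (h : Cov1 a b dl c L) :
    Cov1 a b dl (c + min (dl - c) b + a) (max (dl - c + b) L - min (dl - c) b) := by
  obtain ⟨J, hJ⟩ := h
  refine ⟨false :: J, fun y => ?_⟩
  obtain ⟨x, hx1, hx2, hx3⟩ := hJ y
  have happ : applyWord a b dl (false :: J) y = doubleRot a b dl (applyWord a b dl J y) := rfl
  set u := dl - c with hu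
  by_cases hle : x ≤ dl
  · refine ⟨x + (a + b), ?_, ?_, ?_⟩
    · have : min u b ≤ b := min_le_right _ _
      linarith
    · have h1 : min u b ≤ u := min_le_left _ _
      have h2 : u + b ≤ max (u + b) L := le_max_left _ _
      linarith
    · rw [happ, hx3, doubleRot_coe_le (by linarith) hle hd1]
  · push_neg at hle
    refine ⟨x + a, ?_, ?_, ?_⟩
    · have : min u b ≤ u := min_le_left _ _
      linarith
    · have : L ≤ max (u + b) L := le_max_right _ _
      linarith
    · rw [happ, hx3, doubleRot_coe_gt (by linarith) hle (by linarith)]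

/-- split a single arc `[c, c+ℓ]` crossing `0 ≡ 1`. -/
lemma split0 {c ℓ : ℝ} (hdc : dl < c) (hc1 : c < 1) (hw : 1 ≤ c + ℓ) (hcd : c + ℓ - 1 ≤ dl)
    (hd0 : 0 ≤ dl) (hd1 : dl < 1) (h : Cov1 a b dl c ℓ) :
    Cov2 a b dl (a + b) (c + ℓ - 1) (c + a) (1 - c) := by
  obtain ⟨J, hJ⟩ := h
  refine ⟨false :: J, fun y => ?_⟩
  obtain ⟨x, hx1, hx2, hx3⟩ := hJ y
  have happ : applyWord a b dl (false :: J) y = doubleRot a b dl (applyWord a b dl J y) := rfl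
  by_cases hlt : x < 1
  · refine ⟨x + a, Or.inr ⟨by linarith, by linarith⟩, ?_⟩
    rw [happ, hx3, doubleRot_coe_gt hd0 (by linarith) hlt]
  · push_neg at hlt
    refine ⟨(x - 1) + (a + b), Or.inl ⟨by linarith, by linarith⟩, ?_⟩
    have hxe : (x : AddCircle (1:ℝ)) = ((x - 1 : ℝ) : AddCircle (1:ℝ)) := by
      rw [← coe_add_one (x - 1)]; norm_num
    rw [happ, hx3, hxe, doubleRot_coe_le (by linarith) (by linarith) hd1]

/-- the two-chunk relative move: `A ⊆ [0, dl]` jumps by `a+b`, `B ⊆ (dl, 1)` by `a`. -/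
lemma round2 {c₁ ℓ₁ c₂ ℓ₂ : ℝ} (hd0 : 0 ≤ dl) (h10 : 0 ≤ c₁) (h1d : c₁ + ℓ₁ ≤ dl) (h2d : dl < c₂)
    (h21 : c₂ + ℓ₂ < 1) (hd1 : dl < 1) (h : Cov2 a b dl c₁ ℓ₁ c₂ ℓ₂) :
    Cov2 a b dl (c₁ + (a + b)) ℓ₁ (c₂ + a) ℓ₂ := by
  obtain ⟨J, hJ⟩ := h
  refine ⟨false :: J, fun y => ?_⟩
  obtain ⟨x, hx, hx3⟩ := hJ y
  have happ : applyWord a b dl (false :: J) y = doubleRot a b dl (applyWord a b dl J y) := rfl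
  rcases hx with ⟨ha1, ha2⟩ | ⟨ha1, ha2⟩
  · refine ⟨x + (a + b), Or.inl ⟨by linarith, by linarith⟩, ?_⟩
    rw [happ, hx3, doubleRot_coe_le (by linarith) (by linarith) hd1]
  · refine ⟨x + a, Or.inr ⟨by linarith, by linarith⟩, ?_⟩
    rw [happ, hx3, doubleRot_coe_gt (by linarith) (by linarith) (by linarith)]

/-- reposition a single arc anywhere (using density of the forward rotation orbit). -/
lemma cov1_move (ha : Irrational a) {c ℓ : ℝ} (h : Cov1 a b dl c ℓ) {lo hi : ℝ} (hlh : lo < hi) :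
    ∃ c', lo < c' ∧ c' < hi ∧ Cov1 a b dl c' ℓ := by
  obtain ⟨n, z, h1, h2⟩ := CWISA2.dens ha (lo - c + (hi - lo) / 3) (by linarith : (0:ℝ) < (hi - lo)/3)
  refine ⟨c + (n * a - z), by linarith, by linarith, ?_⟩
  have := cov1_shift (-z) (cov1_rotn n h)
  have he : c + n * a + ((-z : ℤ) : ℝ) = c + (n * a - z) := by push_cast; ring
  rwa [he] at this

/-- reposition a two-chunk configuration, with prescribed relative displacement `c₂ - c₁ - z`. -/
lemma cov2_move (ha : Irrational a) {c₁ ℓ₁ c₂ ℓ₂ : ℝ} (z : ℤ)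
    (h : Cov2 a b dl c₁ ℓ₁ c₂ ℓ₂) {lo hi : ℝ} (hlh : lo < hi) :
    ∃ c', lo < c' ∧ c' < hi ∧ Cov2 a b dl c' ℓ₁ (c' + (c₂ - c₁ - z)) ℓ₂ := by
  obtain ⟨n, w, h1, h2⟩ := CWISA2.dens ha (lo - c₁ + (hi - lo) / 3) (by linarith : (0:ℝ) < (hi - lo)/3)
  refine ⟨c₁ + (n * a - w), by linarith, by linarith, ?_⟩
  have := cov2_shift (-w) (-w - z) (cov2_rotn n h)
  have he1 : c₁ + n * a + ((-w : ℤ) : ℝ) = c₁ + (n * a - w) := by push_cast; ring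
  have he2 : c₂ + n * a + ((-w - z : ℤ) : ℝ) = c₁ + (n * a - w) + (c₂ - c₁ - z) := by
    push_cast; ring
  rwa [he1, he2] at this

end CWISA

namespace CWISA
variable {a b dl : ℝ}

/-- Phase 1: shrink a single covering arc down to length in `(b, b+ε]`. -/
lemma phase1 (ha : Irrational a) (hb0 : 0 < b) (hbd : b < dl) (hd1 : dl < 1)
    (hbd1 : b < 1 - dl) {ε : ℝ} (hε : 0 < ε) :
    ∀ n : ℕ, ∀ L c : ℝ, b < L → L < 1 → L ≤ b + ε + n * (min (min ε dl) b / 2) →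
      Cov1 a b dl c L → ∃ c' ℓ, b < ℓ ∧ ℓ ≤ b + ε ∧ Cov1 a b dl c' ℓ := by
  intro n
  induction n with
  | zero =>
      intro L c hbL hL1 hLb hcov
      exact ⟨c, L, hbL, by simpa using hLb, hcov⟩
  | succ n ih =>
      intro L c hbL hL1 hLb hcov
      by_cases hdone : L ≤ b + ε
      · exact ⟨c, L, hbL, hdone, hcov⟩
      push_neg at hdone
      set m := min (L - b) dl with hm
      have hd0 : 0 < dl := lt_trans hb0 hbd
      have hm0 : 0 < m := lt_min (by linarith) hd0
      have hmLb : m ≤ L - b := min_le_left _ _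
      have hmdl : m ≤ dl := min_le_right _ _
      set wlo := max (m/2) (max 0 (L + dl - 1)) with hwlo
      have hwm : wlo < m := by
        apply max_lt (by linarith)
        apply max_lt hm0
        exact lt_min (by linarith) (by linarith)
      -- position the arc at [c', c'+L] with u = dl - c' ∈ (wlo, m)
      obtain ⟨c', hc'1, hc'2, hcov'⟩ := cov1_move ha hcov (by linarith : dl - m < dl - wlo)
      set u := dl - c' with hu
      have hu1 : wlo < u := by simp only [hu]; linarith
      have hu2 : u < m := by simp only [hu]; linarith
      have hwlo0 : m/2 ≤ wlo := le_max_left _ _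
      have hwlo1 : L + dl - 1 ≤ wlo := le_trans (le_max_right _ _) (le_max_right _ _)
      have hfold := fold1 (by linarith : (0:ℝ) ≤ c') (by linarith : c' ≤ dl)
        (by linarith : c' + L < 1) hd1 hb0.le hcov'
      have hmaxL : max (dl - c' + b) L = L := max_eq_right (by linarith)
      rw [show dl - c' = u from rfl, hmaxL] at hfold
      -- new length L - min u b
      have hmin1 : min u b ≤ u := min_le_left _ _
      have hmin2 : min u b ≤ b := min_le_right _ _
      have hμmin : min (min ε dl) b / 2 ≤ min u b := by
        rcases le_total b u with hbu | hub
        · have : min u b = b := min_eq_right hbu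
          rw [this]
          have h1 : min (min ε dl) b ≤ b := min_le_right _ _
          linarith
        · have : min u b = u := min_eq_left hub
          rw [this]
          have h1 : min ε dl ≤ m := le_min (by linarith [min_le_left ε dl]) (by
            linarith [min_le_right ε dl])
          have h2 : min (min ε dl) b ≤ min ε dl := min_le_left _ _
          linarith
      have hnew1 : b < L - min u b := by linarith
      have hnew2 : L - min u b < 1 := by
        have : 0 < min u b := lt_min (by linarith) hb0
        linarith
      have hnew3 : L - min u b ≤ b + ε + n * (min (min ε dl) b / 2) := by
        have hc : ((n+1 : ℕ) : ℝ) = (n:ℝ) + 1 := by push_cast; ring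
        rw [hc] at hLb
        nlinarith [hμmin]
      exact ih (L - min u b) (c' + min u b + a) hnew1 hnew2 hnew3 hfold

lemma norm_coe_le (y : ℝ) : ‖(y : AddCircle (1:ℝ))‖ ≤ |y| := by
  rw [AddCircle.norm_eq]
  have := round_le ((1:ℝ)⁻¹ * y) 0
  simpa using this

end CWISA


set_option maxHeartbeats 2000000 in
/-- For the rigid rotation `T₁(y) = y + α` and the double rotation
`T₂ = T_{α,β,δ}` with `α, β` irrational, `0 < β < min(δ, 1-δ)`, `δ ∈ (0,1)`: there is a
finite itinerary `J` such that `T_J(S)` is contained in an arc (a closed connected subset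
of `S`) of length less than `β`. -/
theorem circle_word_into_short_arc (a b dl : ℝ) (ha : Irrational a) (ha0 : 0 < a) (ha1 : a < 1)
    (hb : Irrational b) (hb0 : 0 < b) (hb1 : b < min dl (1 - dl))
    (hd0 : 0 < dl) (hd1 : dl < 1) :
    ∃ J : List Bool, ∃ I : Set (AddCircle (1 : ℝ)),
      IsClosed I ∧ IsConnected I ∧ volume I < ENNReal.ofReal b ∧
        Set.range (applyWord a b dl J) ⊆ I := by
  classical
  have hbd : b < dl := lt_of_lt_of_le hb1 (min_le_left _ _)
  have hbd1 : b < 1 - dl := lt_of_lt_of_le hb1 (min_le_right _ _)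
  have hbhalf : 2 * b < 1 := by linarith
  -- the arithmetic of b : N = ⌊1/b⌋, r = 1 - N b ∈ (0, b)
  set N := ⌊1/b⌋₊ with hN
  have hN2 : 2 ≤ N := by
    apply Nat.le_floor
    rw [le_div_iff₀ hb0]
    push_cast; linarith
  have hNb : (N : ℝ) * b ≤ 1 := by
    have h1 : (N : ℝ) ≤ 1/b := Nat.floor_le (by positivity)
    calc (N:ℝ) * b ≤ (1/b) * b := by nlinarith
      _ = 1 := by field_simp
  set r := 1 - N * b with hr
  have hr0 : 0 < r := by
    rcases lt_or_eq_of_le hNb with h | h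
    · simp only [hr]; linarith
    · exfalso
      have hN0 : (N:ℝ) ≠ 0 := by
        have : (0:ℕ) < N := by omega
        exact_mod_cast Nat.pos_iff_ne_zero.mp this
      have hbq : b = ((N:ℝ))⁻¹ := by
        field_simp
        linear_combination h
      refine hb ⟨((N:ℚ))⁻¹, ?_⟩
      push_cast
      exact hbq.symm
  have hrb : r < b := by
    have h1 : 1/b < N + 1 := Nat.lt_floor_add_one _
    have h2 : 1 < ((N:ℝ) + 1) * b := by
      rw [div_lt_iff₀ hb0] at h1
      linarith
    simp only [hr]; nlinarith
  set K := N - 2 with hK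
  have hKcast : (K : ℝ) = (N : ℝ) - 2 := by
    have : ((K : ℕ) : ℝ) = ((N : ℕ) : ℝ) - ((2:ℕ) : ℝ) := by
      rw [hK]
      push_cast [Nat.cast_sub hN2]
      ring
    simpa using this
  -- epsilon
  set ε := min (min (dl - b) (1 - dl)) (min r (b - r)) / 8 with hε
  have hε0 : 0 < ε := by
    apply div_pos _ (by norm_num)
    exact lt_min (lt_min (by linarith) (by linarith)) (lt_min hr0 (by linarith))
  have h8a : 8 * ε ≤ dl - b := by
    have := min_le_left (min (dl - b) (1 - dl)) (min r (b - r))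
    have := min_le_left (dl - b) (1 - dl)
    simp only [hε]; linarith
  have h8b : 8 * ε ≤ 1 - dl := by
    have := min_le_left (min (dl - b) (1 - dl)) (min r (b - r))
    have := min_le_right (dl - b) (1 - dl)
    simp only [hε]; linarith
  have h8c : 8 * ε ≤ r := by
    have := min_le_right (min (dl - b) (1 - dl)) (min r (b - r))
    have := min_le_left r (b - r)
    simp only [hε]; linarith
  have h8d : 8 * ε ≤ b - r := by
    have := min_le_right (min (dl - b) (1 - dl)) (min r (b - r))
    have := min_le_right r (b - r)
    simp only [hε]; linarith
  -- Phase 1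
  have hstart : CWISA.Cov1 a b dl (a + b) (1 - b) :=
    CWISA.cov1_start hb0 hbd.le hd1 (by linarith)
  set μ := min (min ε dl) b / 2 with hμ
  have hμ0 : 0 < μ := by
    apply div_pos _ (by norm_num)
    exact lt_min (lt_min hε0 hd0) hb0
  obtain ⟨n, hn⟩ := exists_nat_ge ((1 - b - b - ε)/μ)
  have hnμ : 1 - b ≤ b + ε + n * μ := by
    rw [div_le_iff₀ hμ0] at hn
    linarith
  obtain ⟨c, ℓ, hℓb, hℓε, hcov⟩ := CWISA.phase1 ha hb0 hbd hd1 hbd1 hε0 n (1 - b) (a + b)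
    (by linarith) (by linarith) hnμ hstart
  set ε' := ℓ - b with hε'
  have hε'0 : 0 < ε' := by simp only [hε']; linarith
  have hε'ε : ε' ≤ ε := by simp only [hε']; linarith
  -- Phase 2 : position the arc to cross 0 and split
  obtain ⟨c', hc'1, hc'2, hcov'⟩ := CWISA.cov1_move ha hcov
    (by linarith : 1 - 2*ε < 1 - ε)
  set s := 1 - c' with hs
  have hsε : ε < s := by simp only [hs]; linarith
  have hs2ε : s < 2*ε := by simp only [hs]; linarith
  have hsplit := CWISA.split0 (by linarith : dl < c') (by linarith : c' < 1)
    (by linarith : 1 ≤ c' + ℓ) (by linarith : c' + ℓ - 1 ≤ dl) hd0.le hd1 hcov'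
  have hLA : c' + ℓ - 1 = ℓ - s := by simp only [hs]; ring
  have hsv : 1 - c' = s := by simp only [hs]
  rw [hLA, hsv] at hsplit
  -- Phase 3
  set LA := ℓ - s with hLAdef
  have hLA0 : 0 < LA := by simp only [hLAdef]; linarith
  have hLAb : LA < b := by
    have h1 : LA = ℓ - s := hLAdef
    linarith
  have hLAdl : LA < dl := by linarith
  set g : ℕ → ℝ := fun k => 1 - ℓ - ((k:ℝ) + 1) * b with hg
  have hgK1 : g K = r - ε' := by
    simp only [hg, hr, hε', hKcast]
    ring
  have hbase : ∃ c₁, CWISA.Cov2 a b dl c₁ LA (c₁ + (LA + g 0)) s := by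
    refine ⟨a + b, ?_⟩
    have : (a + b) + (LA + g 0) = c' + a := by
      simp only [hg, hLAdef, hs]
      push_cast
      ring
    rw [this]
    exact hsplit
  have hstep : ∀ k : ℕ, (k : ℝ) ≤ (K : ℝ) →
      (∃ c₁, CWISA.Cov2 a b dl c₁ LA (c₁ + (LA + g k)) s) →
      (∃ c₁, CWISA.Cov2 a b dl c₁ LA (c₁ + (LA + g (k+1))) s) := by
    intro k hkK ⟨c₁, hcv⟩
    have hgk0 : 0 < g k := by
      have h1 : g k ≥ g K := by
        simp only [hg]
        nlinarith [mul_nonneg (sub_nonneg.mpr hkK) hb0.le]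
      rw [hgK1] at h1
      linarith
    have hgk1 : g k ≤ 1 - ℓ - b := by
      simp only [hg]
      nlinarith [mul_nonneg (Nat.cast_nonneg k : (0:ℝ) ≤ (k:ℝ)) hb0.le]
    have hwin : max 0 (dl - LA - g k) < min (dl - LA) (1 - s - LA - g k) := by
      apply max_lt
      · refine lt_min (by linarith) (by linarith)
      · apply lt_min (by linarith) (by linarith)
    obtain ⟨c₁', hlo, hhi, hcv'⟩ := CWISA.cov2_move ha 0 hcv hwin
    have hz : c₁ + (LA + g k) - c₁ - ((0:ℤ):ℝ) = LA + g k := by push_cast; ring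
    rw [hz] at hcv'
    have hround := CWISA.round2 hd0.le
      (le_trans (le_max_left 0 _) hlo.le)
      (by
        have := lt_of_lt_of_le hhi (min_le_left _ _)
        linarith)
      (by
        have := lt_of_le_of_lt (le_max_right 0 (dl - LA - g k)) hlo
        linarith)
      (by
        have := lt_of_lt_of_le hhi (min_le_right _ _)
        linarith) hd1 hcv'
    refine ⟨c₁' + (a + b), ?_⟩
    have he : c₁' + (LA + g k) + a = (c₁' + (a + b)) + (LA + g (k+1)) := by
      simp only [hg]
      push_cast
      ring
    rwa [he] at hround
  have hind : ∀ k : ℕ, k ≤ K + 1 → ∃ c₁, CWISA.Cov2 a b dl c₁ LA (c₁ + (LA + g k)) s := by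
    intro k
    induction k with
    | zero => intro _; exact hbase
    | succ k ih =>
        intro hk
        have hkK : k ≤ K := by omega
        have hkKr : (k : ℝ) ≤ (K : ℝ) := by exact_mod_cast hkK
        exact hstep k hkKr (ih (by omega))
  obtain ⟨C₁, hfin⟩ := hind (K + 1) le_rfl
  have hgK2 : g (K + 1) = r - ε' - b := by
    have : g (K + 1) = g K - b := by simp only [hg]; push_cast; ring
    rw [this, hgK1]
  rw [hgK2] at hfin
  -- absorb: the second chunk sits inside the first
  have hcov1 : CWISA.Cov1 a b dl C₁ LA := by
    have h1 : LA = ℓ - s := hLAdef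
    apply CWISA.cov2_to_cov1 hfin
    · linarith
    · linarith
  -- final assembly
  obtain ⟨J, hJ⟩ := hcov1
  have hcont : Continuous (fun x : ℝ => (x : AddCircle (1:ℝ))) := continuous_quotient_mk'
  refine ⟨J, (fun x : ℝ => (x : AddCircle (1:ℝ))) '' Set.Icc C₁ (C₁ + LA), ?_, ?_, ?_, ?_⟩
  · exact (isCompact_Icc.image hcont).isClosed
  · refine ⟨⟨(C₁ : AddCircle (1:ℝ)), ⟨C₁, ⟨le_refl _, by linarith⟩, rfl⟩⟩, ?_⟩
    exact (isPreconnected_Icc).image _ hcont.continuousOn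
  · have hsub : (fun x : ℝ => (x : AddCircle (1:ℝ))) '' Set.Icc C₁ (C₁ + LA) ⊆
        Metric.closedBall ((C₁ + LA/2 : ℝ) : AddCircle (1:ℝ)) (LA/2) := by
      rintro _ ⟨x, ⟨hx1, hx2⟩, rfl⟩
      rw [Metric.mem_closedBall, dist_eq_norm]
      have : (x : AddCircle (1:ℝ)) - ((C₁ + LA/2 : ℝ) : AddCircle (1:ℝ))
          = ((x - (C₁ + LA/2) : ℝ) : AddCircle (1:ℝ)) := rfl
      rw [this]
      refine le_trans (CWISA.norm_coe_le _) ?_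
      rw [abs_le]
      constructor <;> linarith
    calc volume ((fun x : ℝ => (x : AddCircle (1:ℝ))) '' Set.Icc C₁ (C₁ + LA))
        ≤ volume (Metric.closedBall ((C₁ + LA/2 : ℝ) : AddCircle (1:ℝ)) (LA/2)) :=
          measure_mono hsub
      _ = ENNReal.ofReal (min 1 (2 * (LA/2))) := AddCircle.volume_closedBall 1 _
      _ = ENNReal.ofReal LA := by
          rw [min_eq_right (by linarith : 2 * (LA/2) ≤ 1)]
          congr 1
          ring
      _ < ENNReal.ofReal b := by
          rw [ENNReal.ofReal_lt_ofReal_iff hb0]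
          exact hLAb
  · rintro _ ⟨y, rfl⟩
    obtain ⟨x, hx1, hx2, hx3⟩ := hJ y
    exact ⟨x, ⟨hx1, hx2⟩, hx3.symm⟩
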